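/- arXiv:0909.4111 — 4 statements merged into one kernel-verified Lean document; each statement's English description precedes it below -/
import Mathlib

section
/- For any nonempty bounded open set A ⊆ ℝ², one has i(A) − |A|²/(2π) − |M(A)|²/|A| ≥ 0, where |A| is the Lebesgue measure of A, M(A) = ∫_A x dx, and i(A) = ∫_A |x|² dx. -/
open MeasureTheory Metric

/-- The plane `ℝ²`. -/
abbrev Plane := EuclideanSpace ℝ (Fin 2)

/-- The mass `|A|` of a set: its two-dimensional Lebesgue measure. -/
noncomputable def mass (A : Set Plane) : ℝ := (volume A).toReal

/-- The momentum `M(A) = ∫_A x dx`. -/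
noncomputable def mom (A : Set Plane) : Plane := ∫ x in A, x

/-- The angular momentum `i(A) = ∫_A |x|² dx`. -/
noncomputable def angMom (A : Set Plane) : ℝ := ∫ x in A, ‖x‖ ^ 2

/-- `Q(A; B_r(x₀)) = ∫_{A △ B_r(x₀)} | |x − x₀|² − r² | dx`. -/
noncomputable def Qfun (A : Set Plane) (x₀ : Plane) (r : ℝ) : ℝ :=
  ∫ x in symmDiff A (ball x₀ r), |‖x - x₀‖ ^ 2 - r ^ 2|

open RealInnerProductSpace

lemma volume_ball_plane (c : Plane) {r : ℝ} (hr : 0 ≤ r) :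
    volume (ball c r) = ENNReal.ofReal (Real.pi * r ^ 2) := by
  rw [EuclideanSpace.volume_ball, Fintype.card_fin]
  norm_num [Real.Gamma_two, Real.sq_sqrt Real.pi_pos.le]
  rw [← ENNReal.ofReal_pow hr, ← ENNReal.ofReal_mul (by positivity)]
  ring_nf

lemma integrableOn_bdd {E : Type*} [NormedAddCommGroup E] [NormedSpace ℝ E]
    {f : Plane → E} (hf : Continuous f) {s : Set Plane}
    (hs : Bornology.IsBounded s) : IntegrableOn f s volume :=
  (hf.continuousOn.integrableOn_compact hs.isCompact_closure).mono_set subset_closure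

lemma ball_integral (c : Plane) {r : ℝ} (hr : 0 ≤ r) :
    ∫ x in ball c r, ‖x - c‖ ^ 2 = Real.pi * r ^ 4 / 2 := by
  have h0 : ∫ x in ball c r, ‖x - c‖ ^ 2 = ∫ x in ball (0 : Plane) r, ‖x‖ ^ 2 := by
    set F : Plane → ℝ := (ball (0 : Plane) r).indicator (fun y => ‖y‖ ^ 2) with hF
    have h1 : (fun x : Plane => F (x - c)) = (ball c r).indicator (fun x => ‖x - c‖ ^ 2) := by
      funext x
      by_cases hx : x ∈ ball c r
      · have : x - c ∈ ball (0 : Plane) r := by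
          rwa [mem_ball_zero_iff, ← dist_eq_norm, ← mem_ball]
        simp [hF, Set.indicator_of_mem, this, hx]
      · have : x - c ∉ ball (0 : Plane) r := by
          rwa [mem_ball_zero_iff, ← dist_eq_norm, ← mem_ball]
        simp [hF, Set.indicator_of_notMem, this, hx]
    calc ∫ x in ball c r, ‖x - c‖ ^ 2
        = ∫ x, (ball c r).indicator (fun x => ‖x - c‖ ^ 2) x := by
          rw [integral_indicator measurableSet_ball]
      _ = ∫ x, F (x - c) := by rw [h1]
      _ = ∫ x, F x := integral_sub_right_eq_self F c
      _ = ∫ x in ball (0 : Plane) r, ‖x‖ ^ 2 := integral_indicator measurableSet_ball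
  rw [h0]
  set f : ℝ → ℝ := (Set.Iio r).indicator (fun y => y ^ 2) with hf
  have h2 : (fun x : Plane => f ‖x‖) = (ball (0 : Plane) r).indicator (fun x => ‖x‖ ^ 2) := by
    funext x
    by_cases hx : ‖x‖ < r
    · simp [hf, Set.indicator, hx, mem_ball_zero_iff]
    · simp [hf, Set.indicator, hx, mem_ball_zero_iff]
  have h3 := MeasureTheory.integral_fun_norm_addHaar (volume : Measure Plane) f
  rw [h2, integral_indicator measurableSet_ball] at h3
  rw [h3]
  have hdim : Module.finrank ℝ Plane = 2 := finrank_euclideanSpace_fin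
  rw [hdim]
  have hball1 : (volume (ball (0 : Plane) 1)).toReal = Real.pi := by
    rw [volume_ball_plane _ (zero_le_one), one_pow, mul_one,
      ENNReal.toReal_ofReal Real.pi_pos.le]
  rw [measureReal_def, hball1]
  have h4 : ∫ y in Set.Ioi (0 : ℝ), y ^ (2 - 1) • f y = r ^ 4 / 4 := by
    have : ∀ y : ℝ, y ^ (2 - 1) • f y = (Set.Iio r).indicator (fun y => y ^ 3) y := by
      intro y
      by_cases hy : y < r
      · simp [hf, Set.indicator, hy]; ring
      · simp [hf, Set.indicator, hy]
    simp_rw [this]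
    rw [setIntegral_indicator measurableSet_Iio, Set.Ioi_inter_Iio,
      ← MeasureTheory.integral_Ioc_eq_integral_Ioo, ← intervalIntegral.integral_of_le hr,
      integral_pow]
    norm_num
  rw [h4]
  simp only [nsmul_eq_mul, smul_eq_mul]
  ring

lemma bathtub (c : Plane) {r : ℝ} (hr : 0 ≤ r) {A : Set Plane} (hAm : MeasurableSet A)
    (hAb : Bornology.IsBounded A) (hvol : volume A = volume (ball c r)) :
    ∫ x in ball c r, ‖x - c‖ ^ 2 ≤ ∫ x in A, ‖x - c‖ ^ 2 := by
  set g : Plane → ℝ := fun x => ‖x - c‖ ^ 2 with hg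
  have hgc : Continuous g := by continuity
  set B := ball c r with hB
  have hBm : MeasurableSet B := measurableSet_ball
  have hBb : Bornology.IsBounded B := isBounded_ball
  have hAfin : volume A < ⊤ := hAb.measure_lt_top
  have hBfin : volume B < ⊤ := hBb.measure_lt_top
  have intA : IntegrableOn g A := integrableOn_bdd hgc hAb
  have intB : IntegrableOn g B := integrableOn_bdd hgc hBb
  have hmeas : volume (A \ B) = volume (B \ A) := by
    have e1 : volume (A ∩ B) + volume (A \ B) = volume A :=
      measure_inter_add_diff A hBm
    have e2 : volume (B ∩ A) + volume (B \ A) = volume B :=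
      measure_inter_add_diff B hAm
    rw [Set.inter_comm] at e2
    have hfin : volume (A ∩ B) ≠ ⊤ :=
      (lt_of_le_of_lt (measure_mono Set.inter_subset_left) hAfin).ne
    have : volume (A ∩ B) + volume (A \ B) = volume (A ∩ B) + volume (B \ A) := by
      rw [e1, e2, hvol]
    exact (ENNReal.add_right_inj hfin).mp this
  have hsplitA := integral_inter_add_diff (μ := volume) (s := A) (t := B) hBm intA
  have hsplitB := integral_inter_add_diff (μ := volume) (s := B) (t := A) hAm intB
  rw [Set.inter_comm] at hsplitB
  have h1 : r ^ 2 * (volume (A \ B)).toReal ≤ ∫ x in A \ B, g x := by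
    apply setIntegral_ge_of_const_le_real (hAm.diff hBm)
      ((lt_of_le_of_lt (measure_mono Set.diff_subset) hAfin).ne)
    · intro x hx
      have hxr : r ≤ ‖x - c‖ := by
        have := hx.2
        rw [hB, mem_ball, not_lt, dist_eq_norm] at this
        exact this
      exact pow_le_pow_left₀ hr hxr 2
    · exact intA.mono_set Set.diff_subset
  have h2 : ∫ x in B \ A, g x ≤ r ^ 2 * (volume (B \ A)).toReal := by
    have hle : ∀ x ∈ B \ A, g x ≤ (fun _ : Plane => r ^ 2) x := by
      intro x hx
      have hxr : ‖x - c‖ ≤ r := by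
        have := hx.1
        rw [hB, mem_ball, dist_eq_norm] at this
        exact this.le
      exact pow_le_pow_left₀ (norm_nonneg _) hxr 2
    have := setIntegral_mono_on (intB.mono_set Set.diff_subset)
      (integrableOn_const (C := r ^ 2)
        (lt_of_le_of_lt (measure_mono Set.diff_subset) hBfin).ne)
      (hBm.diff hAm) hle
    rwa [setIntegral_const, smul_eq_mul, mul_comm] at this
  rw [hmeas] at h1
  linarith

/-- For any nonempty bounded open set `A ⊆ ℝ²`,
`i(A) − |A|²/(2π) − |M(A)|²/|A| ≥ 0`. -/
theorem stmt0 (A : Set Plane) (hA : IsOpen A) (hAb : Bornology.IsBounded A)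
    (hAne : A.Nonempty) :
    angMom A - (mass A) ^ 2 / (2 * Real.pi) - ‖mom A‖ ^ 2 / mass A ≥ 0 := by
  have hpi : (0 : ℝ) < Real.pi := Real.pi_pos
  have hAm : MeasurableSet A := hA.measurableSet
  have hAfin : volume A < ⊤ := hAb.measure_lt_top
  have hm : 0 < mass A :=
    ENNReal.toReal_pos (hA.measure_pos volume hAne).ne' hAfin.ne
  set m := mass A with hmdef
  set M := mom A with hMdef
  set c : Plane := m⁻¹ • M with hcdef
  set r := Real.sqrt (m / Real.pi) with hrdef
  have hr : 0 ≤ r := Real.sqrt_nonneg _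
  have hr2 : r ^ 2 = m / Real.pi := Real.sq_sqrt (by positivity)
  have hvol : volume A = volume (ball c r) := by
    rw [volume_ball_plane c hr, hr2, mul_div_cancel₀ _ hpi.ne',
      hmdef, mass, ENNReal.ofReal_toReal hAfin.ne]
  -- translation identity
  have hId : IntegrableOn (fun x : Plane => x) A volume :=
    integrableOn_bdd continuous_id hAb
  have hN2 : IntegrableOn (fun x : Plane => ‖x‖ ^ 2) A volume :=
    integrableOn_bdd (by continuity) hAb
  have hInner : IntegrableOn (fun x : Plane => 2 * ⟪x, c⟫) A volume :=
    integrableOn_bdd (continuous_const.mul (continuous_id.inner continuous_const)) hAb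
  have hInnerVal : ∫ x in A, ⟪x, c⟫ = m⁻¹ * ‖M‖ ^ 2 := by
    have h1 : ∫ x in A, ⟪x, c⟫ = ∫ x in A, ⟪c, x⟫ := by
      simp_rw [real_inner_comm]
    rw [h1, integral_inner hId c, hcdef, real_inner_smul_left]
    have h2 : (∫ x in A, x : Plane) = M := rfl
    rw [h2, real_inner_self_eq_norm_sq]
  have hkey : ∫ x in A, ‖x - c‖ ^ 2 = angMom A - ‖M‖ ^ 2 / m := by
    have hexp : ∀ x : Plane, ‖x - c‖ ^ 2 = ‖x‖ ^ 2 - 2 * ⟪x, c⟫ + ‖c‖ ^ 2 :=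
      fun x => norm_sub_sq_real x c
    simp_rw [hexp]
    have hsub : IntegrableOn (fun x : Plane => ‖x‖ ^ 2 - 2 * ⟪x, c⟫) A volume :=
      hN2.sub hInner
    rw [integral_add hsub (integrableOn_const hAfin.ne),
      integral_sub hN2 hInner, integral_const_mul, hInnerVal, setIntegral_const]
    have hcn : ‖c‖ ^ 2 = m⁻¹ ^ 2 * ‖M‖ ^ 2 := by
      rw [hcdef, norm_smul, mul_pow, Real.norm_eq_abs, abs_of_pos (by positivity)]
    rw [hcn, smul_eq_mul]
    have e1 : (∫ a in A, ‖a‖ ^ 2) = angMom A := rfl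
    have e2 : volume.real A = m := rfl
    rw [e1, e2]
    field_simp
    ring
  have hball : ∫ x in ball c r, ‖x - c‖ ^ 2 = m ^ 2 / (2 * Real.pi) := by
    rw [ball_integral c hr]
    have : r ^ 4 = (m / Real.pi) ^ 2 := by
      rw [← hr2]; ring
    rw [this]
    field_simp
  have := bathtub c hr hAm hAb hvol
  rw [hball, hkey] at this
  linarith
end

section
/- Let A ⊆ ℝ² be a nonempty bounded open set, x₀ ∈ ℝ², and r > 0. Then Q(A; B_r(x₀)) = i(A) − |A|²/(2π) − |M(A)|²/|A| + (1/(2π))(πr² − |A|)² + |A| · |x₀ − M(A)/|A||². -/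
open MeasureTheory Metric Set

lemma vol_ball_plane (x₀ : Plane) (r : ℝ) (hr : 0 ≤ r) :
    volume (ball x₀ r) = ENNReal.ofReal (Real.pi * r ^ 2) := by
  rw [EuclideanSpace.volume_ball, Fintype.card_fin]
  have h2 : ((2:ℕ) : ℝ) / 2 + 1 = 2 := by norm_num
  rw [h2, Real.Gamma_two, div_one, Real.sq_sqrt Real.pi_nonneg,
    ← ENNReal.ofReal_pow hr, ← ENNReal.ofReal_mul (by positivity), mul_comm]

lemma ball_moment (r : ℝ) (hr : 0 < r) :
    ∫ x in ball (0 : Plane) r, ‖x‖ ^ 2 = Real.pi * r ^ 4 / 2 := by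
  have key := MeasureTheory.integral_fun_norm_addHaar (volume : Measure Plane)
    (Set.indicator (Set.Iio r) (fun t : ℝ => t ^ 2))
  have hdim : Module.finrank ℝ Plane = 2 := by simp [finrank_euclideanSpace]
  rw [hdim] at key
  have h1 : ∫ (x : Plane), Set.indicator (Set.Iio r) (fun t : ℝ => t ^ 2) ‖x‖
      = ∫ x in ball (0 : Plane) r, ‖x‖ ^ 2 := by
    rw [← integral_indicator measurableSet_ball]
    congr 1
    ext x
    by_cases hx : x ∈ ball (0 : Plane) r
    · rw [Set.indicator_of_mem hx, Set.indicator_of_mem (by simpa [dist_eq_norm] using hx)]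
    · rw [Set.indicator_of_notMem hx, Set.indicator_of_notMem (by simpa [dist_eq_norm] using hx)]
  have h2 : ∫ y in Ioi (0:ℝ), y ^ (2 - 1) • Set.indicator (Set.Iio r) (fun t : ℝ => t ^ 2) y
      = r ^ 4 / 4 := by
    have : ∀ y : ℝ, y ^ (2 - 1) • Set.indicator (Set.Iio r) (fun t : ℝ => t ^ 2) y
        = Set.indicator (Set.Iio r) (fun t : ℝ => t ^ 3) y := by
      intro y
      by_cases hy : y ∈ Set.Iio r
      · rw [Set.indicator_of_mem hy, Set.indicator_of_mem hy, smul_eq_mul]; ring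
      · rw [Set.indicator_of_notMem hy, Set.indicator_of_notMem hy, smul_zero]
    simp_rw [this]
    rw [setIntegral_indicator measurableSet_Iio]
    rw [Ioi_inter_Iio, ← integral_Ioc_eq_integral_Ioo, ← intervalIntegral.integral_of_le hr.le,
      integral_pow]
    norm_num
  rw [h1, h2, measureReal_def, vol_ball_plane _ _ zero_le_one] at key
  rw [key, ENNReal.toReal_ofReal (by positivity)]
  simp only [smul_eq_mul, nsmul_eq_mul]
  push_cast
  ring

/-- For a nonempty bounded open set `A ⊆ ℝ²`, `x₀ ∈ ℝ²`, `r > 0`: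
`Q(A; B_r(x₀)) = i(A) − |A|²/(2π) − |M(A)|²/|A| + (1/(2π))(πr² − |A|)²
  + |A|·|x₀ − M(A)/|A||²`. -/
theorem stmt2 (A : Set Plane) (hA : IsOpen A) (hAb : Bornology.IsBounded A)
    (hAne : A.Nonempty) (x₀ : Plane) (r : ℝ) (hr : 0 < r) :
    Qfun A x₀ r =
      angMom A - (mass A) ^ 2 / (2 * Real.pi) - ‖mom A‖ ^ 2 / mass A
        + (1 / (2 * Real.pi)) * (Real.pi * r ^ 2 - mass A) ^ 2
        + mass A * ‖x₀ - (mass A)⁻¹ • mom A‖ ^ 2 := by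
  have hπ := Real.pi_pos
  set B := ball x₀ r with hB
  set f : Plane → ℝ := fun x => ‖x - x₀‖ ^ 2 - r ^ 2 with hf
  have hfc : Continuous f := by fun_prop
  have hAm : MeasurableSet A := hA.measurableSet
  have hBm : MeasurableSet B := measurableSet_ball
  have hKA : IsCompact (closure A) := hAb.isCompact_closure
  have intA : ∀ g : Plane → ℝ, Continuous g → IntegrableOn g A volume := fun g hg =>
    (hg.continuousOn.integrableOn_compact hKA).mono_set subset_closure
  have intAv : IntegrableOn (fun x : Plane => x) A volume :=
    (continuous_id.continuousOn.integrableOn_compact hKA).mono_set subset_closure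
  have intB : ∀ g : Plane → ℝ, Continuous g → IntegrableOn g B volume := fun g hg =>
    (hg.continuousOn.integrableOn_compact (isCompact_closedBall x₀ r)).mono_set
      ball_subset_closedBall
  have hvolA : volume A ≠ ⊤ := hAb.measure_lt_top.ne
  have hvolB : volume B ≠ ⊤ := by rw [hB, vol_ball_plane _ _ hr.le]; exact ENNReal.ofReal_ne_top
  have hmass : 0 < mass A := ENNReal.toReal_pos (hA.measure_pos volume hAne).ne' hvolA
  -- Step 1: Q = ∫_A f - ∫_B f
  have hQ : Qfun A x₀ r = (∫ x in A, f x) - ∫ x in B, f x := by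
    have hd : Disjoint (A \ B) (B \ A) := disjoint_sdiff_sdiff
    have hint1 : IntegrableOn f (A \ B) volume := (intA f hfc).mono_set diff_subset
    have hint2 : IntegrableOn f (B \ A) volume := (intB f hfc).mono_set diff_subset
    have e1 : ∫ x in A \ B, |f x| = ∫ x in A \ B, f x := by
      refine setIntegral_congr_fun (hAm.diff hBm) fun x hx => ?_
      have hxr : r ≤ ‖x - x₀‖ := by
        have := hx.2
        simpa [hB, mem_ball, dist_eq_norm, not_lt] using this
      have : 0 ≤ f x := by simp only [hf]; nlinarith
      exact abs_of_nonneg this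
    have e2 : ∫ x in B \ A, |f x| = ∫ x in B \ A, -f x := by
      refine setIntegral_congr_fun (hBm.diff hAm) fun x hx => ?_
      have hxr : ‖x - x₀‖ < r := by
        have := hx.1
        simpa [hB, mem_ball, dist_eq_norm] using this
      have : f x ≤ 0 := by simp only [hf]; nlinarith [norm_nonneg (x - x₀)]
      exact abs_of_nonpos this
    have d1 : ∫ x in A \ B, f x = (∫ x in A, f x) - ∫ x in A ∩ B, f x := by
      rw [← Set.diff_self_inter]
      exact integral_diff (hAm.inter hBm) (intA f hfc) inter_subset_left
    have d2 : ∫ x in B \ A, f x = (∫ x in B, f x) - ∫ x in A ∩ B, f x := by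
      rw [← Set.diff_inter_self_eq_diff]
      exact integral_diff (hAm.inter hBm) (intB f hfc) inter_subset_right
    have : Qfun A x₀ r = (∫ x in A \ B, |f x|) + ∫ x in B \ A, |f x| := by
      rw [Qfun, Set.symmDiff_def]
      exact setIntegral_union hd (hBm.diff hAm) hint1.abs hint2.abs
    rw [this, e1, e2, integral_neg, d1, d2]
    ring
  -- Step 2: ∫_A f
  have hIA : ∫ x in A, f x
      = angMom A - 2 * (inner ℝ x₀ (mom A) : ℝ) + (‖x₀‖ ^ 2 - r ^ 2) * mass A := by
    have expand : ∀ x : Plane, f x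
        = ‖x‖ ^ 2 - 2 * (inner ℝ x₀ x : ℝ) + (‖x₀‖ ^ 2 - r ^ 2) := by
      intro x
      simp only [hf]
      rw [norm_sub_sq_real, real_inner_comm]
      ring
    have I1 : IntegrableOn (fun x : Plane => ‖x‖ ^ 2) A volume := intA _ (by fun_prop)
    have I2 : IntegrableOn (fun x : Plane => 2 * (inner ℝ x₀ x : ℝ)) A volume := by
      refine intA _ ?_
      exact continuous_const.mul (continuous_const.inner continuous_id)
    have I3 : IntegrableOn (fun _ : Plane => ‖x₀‖ ^ 2 - r ^ 2) A volume :=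
      integrableOn_const hvolA
    calc ∫ x in A, f x
        = ∫ x in A, (‖x‖ ^ 2 - 2 * (inner ℝ x₀ x : ℝ) + (‖x₀‖ ^ 2 - r ^ 2)) := by
          simp_rw [expand]
      _ = (∫ x in A, ‖x‖ ^ 2) - (∫ x in A, 2 * (inner ℝ x₀ x : ℝ))
            + ∫ x in A, (‖x₀‖ ^ 2 - r ^ 2) := by
          have I12 : IntegrableOn (fun x : Plane => ‖x‖ ^ 2 - 2 * (inner ℝ x₀ x : ℝ)) A volume :=
            I1.sub I2
          rw [integral_add I12 I3, integral_sub I1 I2]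
      _ = angMom A - 2 * (inner ℝ x₀ (mom A) : ℝ) + (‖x₀‖ ^ 2 - r ^ 2) * mass A := by
          rw [integral_const_mul, integral_inner intAv x₀, setIntegral_const, smul_eq_mul,
            mul_comm]
          rw [angMom, mom, mass, measureReal_def]
          ring
  -- Step 3: ∫_B f
  have hIB : ∫ x in B, f x = -(Real.pi * r ^ 4 / 2) := by
    have htrans : ∫ x in B, ‖x - x₀‖ ^ 2 = ∫ x in ball (0 : Plane) r, ‖x‖ ^ 2 := by
      have key := (measurePreserving_add_right (volume : Measure Plane) x₀).setIntegral_preimage_emb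
        (measurableEmbedding_addRight x₀) (fun y => ‖y - x₀‖ ^ 2) B
      have hpre : (· + x₀) ⁻¹' B = ball (0 : Plane) r := by
        ext x
        simp [hB, mem_ball, dist_eq_norm]
      rw [hpre] at key
      rw [← key]
      refine setIntegral_congr_fun measurableSet_ball fun x _ => ?_
      simp
    have : ∫ x in B, f x = (∫ x in B, ‖x - x₀‖ ^ 2) - ∫ x in B, (r ^ 2 : ℝ) := by
      rw [← integral_sub (intB _ (by fun_prop)) (integrableOn_const hvolB)]
    rw [this, htrans, ball_moment r hr, setIntegral_const, smul_eq_mul, measureReal_def, hB,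
      vol_ball_plane _ _ hr.le, ENNReal.toReal_ofReal (by positivity)]
    ring
  -- Step 4: norm expansion
  have hnorm : ‖x₀ - (mass A)⁻¹ • mom A‖ ^ 2
      = ‖x₀‖ ^ 2 - 2 * ((mass A)⁻¹ * (inner ℝ x₀ (mom A) : ℝ)) + ((mass A)⁻¹) ^ 2 * ‖mom A‖ ^ 2 := by
    rw [norm_sub_sq_real, real_inner_smul_right, norm_smul, Real.norm_eq_abs, mul_pow, sq_abs]
  rw [hQ, hIA, hIB, hnorm]
  field_simp
  ring
end

section
/- Let r > 0 and let A' ⊆ ℝ² be a nonempty bounded open set. Then (|A'| − πr²)² ≤ 2π Q(A'; B_r(0)), and equality holds if and only if A' coincides, up to a set of Lebesgue measure zero, with a ball centered at the origin. -/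
open MeasureTheory Metric

section Helpers

lemma vol_ball (s : ℝ) (hs : 0 ≤ s) :
    volume (ball (0 : Plane) s) = ENNReal.ofReal (Real.pi * s ^ 2) := by
  rw [EuclideanSpace.volume_ball]
  simp only [Fintype.card_fin]
  rw [show ((2:ℕ)/2 + 1 : ℝ) = 2 by norm_num, Real.Gamma_two, div_one,
    Real.sq_sqrt Real.pi_nonneg, ← ENNReal.ofReal_pow hs, ← ENNReal.ofReal_mul (by positivity)]
  ring_nf

lemma vol_sphere (x : Plane) (s : ℝ) : volume (sphere x s) = 0 :=
  MeasureTheory.Measure.addHaar_sphere volume x s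

lemma mass_ball (s : ℝ) (hs : 0 ≤ s) : mass (ball (0 : Plane) s) = Real.pi * s ^ 2 := by
  rw [mass, vol_ball s hs, ENNReal.toReal_ofReal (by positivity)]

lemma mass_nonneg (S : Set Plane) : 0 ≤ mass S := ENNReal.toReal_nonneg

lemma vol_ne_top {S : Set Plane} (hS : Bornology.IsBounded S) : volume S ≠ ⊤ :=
  hS.measure_lt_top.ne

lemma int_ball_sq (s : ℝ) (hs : 0 ≤ s) :
    ∫ x in ball (0 : Plane) s, ‖x‖ ^ 2 = Real.pi * s ^ 4 / 2 := by
  have key := MeasureTheory.integral_fun_norm_addHaar (volume : Measure Plane)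
    (fun y => Set.indicator (Set.Iio s) (fun y => y ^ 2) y)
  have hdim : Module.finrank ℝ Plane = 2 := by simp [finrank_euclideanSpace]
  rw [hdim] at key
  have h1 : ∀ x : Plane, Set.indicator (Set.Iio s) (fun y => y ^ 2) ‖x‖
      = Set.indicator (ball (0:Plane) s) (fun x => ‖x‖ ^ 2) x := by
    intro x
    by_cases h : ‖x‖ < s
    · rw [Set.indicator_of_mem (Set.mem_Iio.2 h) (fun y => y^2),
        Set.indicator_of_mem (mem_ball_zero_iff.2 h)]
    · rw [Set.indicator_of_notMem (fun hx => h (Set.mem_Iio.1 hx)) (fun y => y^2),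
        Set.indicator_of_notMem (fun hx => h (mem_ball_zero_iff.1 hx))]
  simp only [h1] at key
  rw [integral_indicator measurableSet_ball] at key
  rw [key, measureReal_def, vol_ball 1 zero_le_one]
  have h2 : ∀ y : ℝ, y ^ (2-1) • Set.indicator (Set.Iio s) (fun y => y ^ 2) y
      = Set.indicator (Set.Iio s) (fun y => y ^ 3) y := by
    intro y
    by_cases h : y ∈ Set.Iio s
    · simp [Set.indicator_of_mem h]; ring
    · simp [Set.indicator_of_notMem h]
  simp only [h2]
  rw [setIntegral_indicator measurableSet_Iio]
  have h3 : Set.Ioi (0:ℝ) ∩ Set.Iio s = Set.Ioo 0 s := rfl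
  rw [h3, ← MeasureTheory.integral_Ioc_eq_integral_Ioo,
    ← intervalIntegral.integral_of_le hs, integral_pow]
  rw [ENNReal.toReal_ofReal (by positivity)]
  simp
  ring

/-- If `B ⊆ C` and `C \ B` is contained in a sphere, then `C =ᵐ B`. -/
lemma ae_of_diff_subset_sphere {B C : Set Plane} (hBC : B ⊆ C) {x : Plane} {a : ℝ}
    (h : C \ B ⊆ sphere x a) : C =ᵐ[volume] B := by
  rw [MeasureTheory.ae_eq_set]
  constructor
  · exact measure_mono_null h (vol_sphere x a)
  · simp [Set.diff_eq_empty.2 hBC]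

lemma integrableOn_bounded {f : Plane → ℝ} (hf : Continuous f) {S : Set Plane}
    (hS : Bornology.IsBounded S) : IntegrableOn f S volume := by
  obtain ⟨R, hR⟩ := hS.subset_closedBall 0
  exact (hf.continuousOn.integrableOn_compact (isCompact_closedBall 0 R)).mono_set hR

lemma cont_sq : Continuous (fun x : Plane => ‖x‖ ^ 2) := continuous_norm.pow 2

lemma inter_ae_ball {a b : ℝ} (ha : 0 ≤ a) (hab : a ≤ b) :
    (ball (0:Plane) b ∩ closedBall 0 a : Set Plane) =ᵐ[volume] ball (0:Plane) a := by
  apply ae_of_diff_subset_sphere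
  · exact Set.subset_inter (ball_subset_ball hab) ball_subset_closedBall
  · intro y hy
    have h1 : y ∈ closedBall (0:Plane) a := hy.1.2
    have h2 : y ∉ ball (0:Plane) a := hy.2
    rw [← closedBall_diff_ball]; exact ⟨h1, h2⟩

lemma mass_annulus {a b : ℝ} (ha : 0 ≤ a) (hab : a ≤ b) :
    mass (ball (0:Plane) b \ closedBall 0 a) = Real.pi * b ^ 2 - Real.pi * a ^ 2 := by
  have h := measure_inter_add_diff (μ := volume) (t := closedBall 0 a) (ball (0:Plane) b)
    measurableSet_closedBall
  have hfin : volume (ball (0:Plane) b) ≠ ⊤ := vol_ne_top isBounded_ball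
  have h1 : volume (ball (0:Plane) b ∩ closedBall 0 a) = ENNReal.ofReal (Real.pi * a ^ 2) := by
    rw [measure_congr (inter_ae_ball ha hab), vol_ball a ha]
  have h2 : volume (ball (0:Plane) b \ closedBall 0 a) ≠ ⊤ :=
    vol_ne_top (isBounded_ball.subset Set.diff_subset)
  have h3 : volume (ball (0:Plane) b ∩ closedBall 0 a) ≠ ⊤ := by rw [h1]; exact ENNReal.ofReal_ne_top
  have := congrArg ENNReal.toReal h
  rw [ENNReal.toReal_add h3 h2, h1, ENNReal.toReal_ofReal (by positivity)] at this
  have h4 : (volume (ball (0:Plane) b)).toReal = Real.pi * b ^ 2 := mass_ball b (ha.trans hab)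
  rw [h4] at this
  rw [mass]; linarith

lemma int_annulus_sq {a b : ℝ} (ha : 0 ≤ a) (hab : a ≤ b) :
    ∫ x in ball (0:Plane) b \ closedBall 0 a, ‖x‖ ^ 2
      = Real.pi * b ^ 4 / 2 - Real.pi * a ^ 4 / 2 := by
  have hsub : ball (0:Plane) b ∩ closedBall 0 a ⊆ ball (0:Plane) b := Set.inter_subset_left
  have hd : ball (0:Plane) b \ closedBall 0 a = ball (0:Plane) b \ (ball (0:Plane) b ∩ closedBall 0 a) := by
    rw [Set.diff_self_inter]
  rw [hd, integral_diff (measurableSet_ball.inter measurableSet_closedBall)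
    (integrableOn_bounded cont_sq isBounded_ball) hsub,
    setIntegral_congr_set (inter_ae_ball ha hab), int_ball_sq a ha, int_ball_sq b (ha.trans hab)]

lemma int_annulus_low {a b : ℝ} (ha : 0 ≤ a) (hab : a ≤ b) :
    ∫ x in ball (0:Plane) b \ closedBall 0 a, (‖x‖ ^ 2 - a ^ 2)
      = Real.pi / 2 * (b ^ 2 - a ^ 2) ^ 2 := by
  have hb : Bornology.IsBounded (ball (0:Plane) b \ closedBall 0 a) :=
    isBounded_ball.subset Set.diff_subset
  rw [integral_sub (integrableOn_bounded cont_sq hb) (integrableOn_const hb.measure_lt_top.ne),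
    int_annulus_sq ha hab, setIntegral_const, smul_eq_mul, measureReal_def, ← mass, mass_annulus ha hab]
  ring

lemma int_annulus_high {a b : ℝ} (ha : 0 ≤ a) (hab : a ≤ b) :
    ∫ x in ball (0:Plane) b \ closedBall 0 a, (b ^ 2 - ‖x‖ ^ 2)
      = Real.pi / 2 * (b ^ 2 - a ^ 2) ^ 2 := by
  have hb : Bornology.IsBounded (ball (0:Plane) b \ closedBall 0 a) :=
    isBounded_ball.subset Set.diff_subset
  rw [integral_sub (integrableOn_const (μ := volume) (C := b ^ 2) hb.measure_lt_top.ne) (integrableOn_bounded cont_sq hb),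
    int_annulus_sq ha hab, setIntegral_const, smul_eq_mul, measureReal_def, ← mass, mass_annulus ha hab]
  ring

end Helpers

section Core

lemma compare_integral {S N : Set Plane} {g : Plane → ℝ} {c : ℝ}
    (hSm : MeasurableSet S) (hNm : MeasurableSet N)
    (hSf : volume S ≠ ⊤) (hNf : volume N ≠ ⊤) (hvol : volume S = volume N)
    (hgS : IntegrableOn g S volume) (hgN : IntegrableOn g N volume)
    (h1 : ∀ x ∈ S \ N, c ≤ g x) (h2 : ∀ x ∈ N \ S, g x ≤ c) :
    (∫ x in N, g x) ≤ ∫ x in S, g x ∧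
      ((∫ x in S, g x) = (∫ x in N, g x) →
        (∫ x in S \ N, (g x - c)) = 0 ∧ (∫ x in N \ S, (c - g x)) = 0) := by
  have hSd : (∫ x in S, g x) = (∫ x in S ∩ N, g x) + ∫ x in S \ N, g x := by
    rw [integral_inter_add_diff hNm hgS]
  have hNd : (∫ x in N, g x) = (∫ x in S ∩ N, g x) + ∫ x in N \ S, g x := by
    rw [Set.inter_comm, integral_inter_add_diff hSm hgN]
  -- masses of the two differences agree
  have hmeq : volume (S \ N) = volume (N \ S) := by
    have h1' := measure_inter_add_diff (μ := volume) (t := N) S hNm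
    have h2' := measure_inter_add_diff (μ := volume) (t := S) N hSm
    rw [Set.inter_comm N S] at h2'
    rw [hvol] at h1'
    have hfin : volume (S ∩ N) ≠ ⊤ := fun h =>
      hNf (eq_top_iff.2 (h ▸ measure_mono Set.inter_subset_right))
    have := h1'.trans h2'.symm
    rwa [add_comm (volume (S ∩ N)), add_comm (volume (S ∩ N)), ENNReal.add_left_inj hfin] at this
  have hmr : mass (S \ N) = mass (N \ S) := by rw [mass, mass, hmeq]
  have hfSN : volume (S \ N) ≠ ⊤ := fun h => hSf (eq_top_iff.2 (h ▸ measure_mono Set.diff_subset))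
  have hfNS : volume (N \ S) ≠ ⊤ := fun h => hNf (eq_top_iff.2 (h ▸ measure_mono Set.diff_subset))
  have hgSN : IntegrableOn g (S \ N) volume := hgS.mono_set Set.diff_subset
  have hgNS : IntegrableOn g (N \ S) volume := hgN.mono_set Set.diff_subset
  have hcSN : IntegrableOn (fun _ => c) (S \ N) volume :=
    integrableOn_const hfSN
  have hcNS : IntegrableOn (fun _ => c) (N \ S) volume :=
    integrableOn_const hfNS
  have e1 : (∫ x in S \ N, g x) = (∫ x in S \ N, (g x - c)) + c * mass (S \ N) := by
    rw [integral_sub hgSN hcSN, setIntegral_const, smul_eq_mul, measureReal_def, ← mass]; ring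
  have e2 : (∫ x in N \ S, g x) = -(∫ x in N \ S, (c - g x)) + c * mass (N \ S) := by
    rw [integral_sub hcNS hgNS, setIntegral_const, smul_eq_mul, measureReal_def, ← mass]; ring
  have hpos1 : 0 ≤ ∫ x in S \ N, (g x - c) :=
    setIntegral_nonneg (hSm.diff hNm) (fun x hx => sub_nonneg.2 (h1 x hx))
  have hpos2 : 0 ≤ ∫ x in N \ S, (c - g x) :=
    setIntegral_nonneg (hNm.diff hSm) (fun x hx => sub_nonneg.2 (h2 x hx))
  have key : (∫ x in S, g x) - (∫ x in N, g x)
      = (∫ x in S \ N, (g x - c)) + ∫ x in N \ S, (c - g x) := by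
    rw [hSd, hNd, e1, e2, hmr]; ring
  constructor
  · linarith
  · intro heq
    rw [heq] at key
    constructor <;> linarith

lemma null_of_setIntegral_zero {T : Set Plane} {f : Plane → ℝ} {a : ℝ} (hT : MeasurableSet T)
    (hf : IntegrableOn f T volume) (hpos : ∀ x ∈ T, x ∉ sphere (0:Plane) a → 0 < f x)
    (hnonneg : ∀ x ∈ T, 0 ≤ f x) (hzero : (∫ x in T, f x) = 0) : volume T = 0 := by
  by_contra hne
  have hsub : T ⊆ (Function.support f ∩ T) ∪ sphere (0:Plane) a := by
    intro x hx
    by_cases hs : x ∈ sphere (0:Plane) a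
    · exact Or.inr hs
    · exact Or.inl ⟨Function.mem_support.2 (hpos x hx hs).ne', hx⟩
  have hTsup : 0 < volume (Function.support f ∩ T) := by
    rcases eq_or_ne (volume (Function.support f ∩ T)) 0 with h0 | h0
    · exact absurd (measure_mono_null hsub (by
        rw [measure_union_null_iff]; exact ⟨h0, vol_sphere 0 a⟩)) hne
    · exact h0.bot_lt
  have := (setIntegral_pos_iff_support_of_nonneg_ae
    (ae_restrict_of_forall_mem hT hnonneg) hf).2 hTsup
  linarith

end Core

lemma core_out {r : ℝ} (hr : 0 < r) {S : Set Plane} (hSm : MeasurableSet S)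
    (hSb : Bornology.IsBounded S) (hS : S ⊆ (closedBall (0:Plane) r)ᶜ) :
    mass S ^ 2 / (2 * Real.pi) ≤ (∫ x in S, (‖x‖ ^ 2 - r ^ 2)) ∧
      ((∫ x in S, (‖x‖ ^ 2 - r ^ 2)) = mass S ^ 2 / (2 * Real.pi) →
        S =ᵐ[volume] (ball (0:Plane) (Real.sqrt (r ^ 2 + mass S / Real.pi)) \ closedBall 0 r)) := by
  have hπ : (0:ℝ) < Real.pi := Real.pi_pos
  set t := mass S with ht_def
  have ht : 0 ≤ t := mass_nonneg S
  set ρ := Real.sqrt (r ^ 2 + t / Real.pi) with hρ_def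
  have hρ2 : ρ ^ 2 = r ^ 2 + t / Real.pi := Real.sq_sqrt (by positivity)
  have hρnn : 0 ≤ ρ := Real.sqrt_nonneg _
  have htπ : 0 ≤ t / Real.pi := by positivity
  have hrρ : r ≤ ρ := by nlinarith
  have hρ0 : 0 < ρ := lt_of_lt_of_le hr hrρ
  set N := ball (0:Plane) ρ \ closedBall 0 r with hN_def
  have hNm : MeasurableSet N := measurableSet_ball.diff measurableSet_closedBall
  have hNb : Bornology.IsBounded N := isBounded_ball.subset Set.diff_subset
  have hmassN : mass N = t := by
    rw [hN_def, mass_annulus hr.le hrρ, hρ2]; field_simp; ring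
  have hvol : volume S = volume N := by
    rw [← ENNReal.toReal_eq_toReal_iff' (vol_ne_top hSb) (vol_ne_top hNb)]
    exact (hmassN.symm : t = mass N)
  have hintN : (∫ x in N, (‖x‖ ^ 2 - r ^ 2)) = t ^ 2 / (2 * Real.pi) := by
    rw [hN_def, int_annulus_low hr.le hrρ, hρ2]
    field_simp; ring
  set c := ρ ^ 2 - r ^ 2 with hc_def
  have hcont : Continuous (fun x : Plane => ‖x‖ ^ 2 - r ^ 2) := (continuous_norm.pow 2).sub continuous_const
  have h1 : ∀ x ∈ S \ N, c ≤ ‖x‖ ^ 2 - r ^ 2 := by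
    intro x hx
    have hxr : r < ‖x‖ := by
      have := hS hx.1
      simpa [mem_closedBall, dist_zero_right, not_le] using this
    have hxρ : ρ ≤ ‖x‖ := by
      by_contra hcon
      push_neg at hcon
      exact hx.2 ⟨mem_ball_zero_iff.2 hcon, fun hcb => by
        simp only [mem_closedBall, dist_zero_right] at hcb; linarith⟩
    have : ρ ^ 2 ≤ ‖x‖ ^ 2 := pow_le_pow_left₀ hρ0.le hxρ 2
    simp only [hc_def]; linarith
  have h2 : ∀ x ∈ N \ S, ‖x‖ ^ 2 - r ^ 2 ≤ c := by
    intro x hx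
    have hxρ : ‖x‖ < ρ := mem_ball_zero_iff.1 hx.1.1
    have : ‖x‖ ^ 2 ≤ ρ ^ 2 := pow_le_pow_left₀ (norm_nonneg x) hxρ.le 2
    simp only [hc_def]; linarith
  obtain ⟨hle, heqc⟩ := compare_integral hSm hNm (vol_ne_top hSb) (vol_ne_top hNb) hvol
    (integrableOn_bounded hcont hSb) (integrableOn_bounded hcont hNb) h1 h2
  rw [hintN] at hle heqc
  refine ⟨hle, fun heq => ?_⟩
  obtain ⟨hz1, hz2⟩ := heqc heq
  have hnull1 : volume (S \ N) = 0 := by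
    refine null_of_setIntegral_zero (a := ρ) (hSm.diff hNm)
      (integrableOn_bounded (hcont.sub continuous_const) (hSb.subset Set.diff_subset)) ?_ ?_ hz1
    · intro x hx hsp
      have hxρ : ρ ≤ ‖x‖ := by
        have := h1 x hx; simp only [hc_def] at this
        nlinarith [norm_nonneg x]
      have : ‖x‖ ≠ ρ := by
        simpa [mem_sphere_zero_iff_norm] using hsp
      have h' : ρ < ‖x‖ := lt_of_le_of_ne hxρ (Ne.symm this)
      have : ρ ^ 2 < ‖x‖ ^ 2 := by nlinarith
      simp only [hc_def, Pi.sub_apply]; linarith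
    · intro x hx
      have := h1 x hx; simp only [hc_def, Pi.sub_apply] at this ⊢; linarith
  have hnull2 : volume (N \ S) = 0 := by
    refine null_of_setIntegral_zero (a := ρ) (hNm.diff hSm)
      (integrableOn_bounded (continuous_const.sub hcont) (hNb.subset Set.diff_subset)) ?_ ?_ hz2
    · intro x hx _
      have hxρ : ‖x‖ < ρ := mem_ball_zero_iff.1 hx.1.1
      have : ‖x‖ ^ 2 < ρ ^ 2 := by nlinarith [norm_nonneg x]
      simp only [hc_def, Pi.sub_apply]; linarith
    · intro x hx
      have := h2 x hx; simp only [hc_def, Pi.sub_apply] at this ⊢; linarith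
  exact MeasureTheory.ae_eq_set.2 ⟨hnull1, hnull2⟩

lemma core_in {r : ℝ} (hr : 0 < r) {S : Set Plane} (hSm : MeasurableSet S)
    (hS : S ⊆ ball (0:Plane) r) :
    mass S ^ 2 / (2 * Real.pi) ≤ (∫ x in S, (r ^ 2 - ‖x‖ ^ 2)) ∧
      ((∫ x in S, (r ^ 2 - ‖x‖ ^ 2)) = mass S ^ 2 / (2 * Real.pi) →
        S =ᵐ[volume] (ball (0:Plane) r \ closedBall 0 (Real.sqrt (r ^ 2 - mass S / Real.pi)))) := by
  have hπ : (0:ℝ) < Real.pi := Real.pi_pos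
  have hSb : Bornology.IsBounded S := isBounded_ball.subset hS
  set t := mass S with ht_def
  have ht : 0 ≤ t := mass_nonneg S
  have htle : t ≤ Real.pi * r ^ 2 := by
    have h := ENNReal.toReal_mono (vol_ne_top isBounded_ball) (measure_mono hS)
    rw [← mass, ← mass, ← ht_def, mass_ball r hr.le] at h
    exact h
  have htπ : t / Real.pi ≤ r ^ 2 := by rw [div_le_iff₀ hπ]; linarith
  set ρ := Real.sqrt (r ^ 2 - t / Real.pi) with hρ_def
  have hρ2 : ρ ^ 2 = r ^ 2 - t / Real.pi := Real.sq_sqrt (by linarith)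
  have hρnn : 0 ≤ ρ := Real.sqrt_nonneg _
  have htπ0 : 0 ≤ t / Real.pi := by positivity
  have hρr : ρ ≤ r := by nlinarith
  set N := ball (0:Plane) r \ closedBall 0 ρ with hN_def
  have hNm : MeasurableSet N := measurableSet_ball.diff measurableSet_closedBall
  have hNb : Bornology.IsBounded N := isBounded_ball.subset Set.diff_subset
  have hmassN : mass N = t := by
    rw [hN_def, mass_annulus hρnn hρr, hρ2]; field_simp; ring
  have hvol : volume S = volume N := by
    rw [← ENNReal.toReal_eq_toReal_iff' (vol_ne_top hSb) (vol_ne_top hNb)]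
    exact (hmassN.symm : t = mass N)
  have hintN : (∫ x in N, (r ^ 2 - ‖x‖ ^ 2)) = t ^ 2 / (2 * Real.pi) := by
    rw [hN_def, int_annulus_high hρnn hρr, hρ2]
    field_simp; ring
  set c := r ^ 2 - ρ ^ 2 with hc_def
  have hcont : Continuous (fun x : Plane => r ^ 2 - ‖x‖ ^ 2) :=
    continuous_const.sub (continuous_norm.pow 2)
  have h1 : ∀ x ∈ S \ N, c ≤ r ^ 2 - ‖x‖ ^ 2 := by
    intro x hx
    have hxρ : ‖x‖ ≤ ρ := by
      by_contra hcon
      push_neg at hcon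
      exact hx.2 ⟨hS hx.1, fun hcb => by
        simp only [mem_closedBall, dist_zero_right] at hcb; linarith⟩
    have : ‖x‖ ^ 2 ≤ ρ ^ 2 := pow_le_pow_left₀ (norm_nonneg x) hxρ 2
    simp only [hc_def]; linarith
  have h2 : ∀ x ∈ N \ S, r ^ 2 - ‖x‖ ^ 2 ≤ c := by
    intro x hx
    have hxρ : ρ < ‖x‖ := by
      have := hx.1.2
      simpa [mem_closedBall, dist_zero_right, not_le] using this
    have : ρ ^ 2 ≤ ‖x‖ ^ 2 := pow_le_pow_left₀ hρnn hxρ.le 2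
    simp only [hc_def]; linarith
  obtain ⟨hle, heqc⟩ := compare_integral hSm hNm (vol_ne_top hSb) (vol_ne_top hNb) hvol
    (integrableOn_bounded hcont hSb) (integrableOn_bounded hcont hNb) h1 h2
  rw [hintN] at hle heqc
  refine ⟨hle, fun heq => ?_⟩
  obtain ⟨hz1, hz2⟩ := heqc heq
  have hnull1 : volume (S \ N) = 0 := by
    refine null_of_setIntegral_zero (a := ρ) (hSm.diff hNm)
      (integrableOn_bounded (hcont.sub continuous_const) (hSb.subset Set.diff_subset)) ?_ ?_ hz1
    · intro x hx hsp
      have hne : ‖x‖ ≠ ρ := by simpa [mem_sphere_zero_iff_norm] using hsp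
      have hle1 := h1 x hx
      simp only [hc_def] at hle1
      have hxρ : ‖x‖ ≤ ρ := by nlinarith [norm_nonneg x]
      have h' : ‖x‖ < ρ := lt_of_le_of_ne hxρ hne
      have : ‖x‖ ^ 2 < ρ ^ 2 := by nlinarith [norm_nonneg x]
      simp only [hc_def, Pi.sub_apply]; linarith
    · intro x hx
      have := h1 x hx; simp only [hc_def, Pi.sub_apply] at this ⊢; linarith
  have hnull2 : volume (N \ S) = 0 := by
    refine null_of_setIntegral_zero (a := ρ) (hNm.diff hSm)
      (integrableOn_bounded (continuous_const.sub hcont) (hNb.subset Set.diff_subset)) ?_ ?_ hz2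
    · intro x hx _
      have hxρ : ρ < ‖x‖ := by
        have := hx.1.2
        simpa [mem_closedBall, dist_zero_right, not_le] using this
      have : ρ ^ 2 < ‖x‖ ^ 2 := by nlinarith
      simp only [hc_def, Pi.sub_apply]; linarith
    · intro x hx
      have := h2 x hx; simp only [hc_def, Pi.sub_apply] at this ⊢; linarith
  exact MeasureTheory.ae_eq_set.2 ⟨hnull1, hnull2⟩

lemma cont_abs (r : ℝ) : Continuous (fun x : Plane => |‖x‖ ^ 2 - r ^ 2|) :=
  ((continuous_norm.pow 2).sub continuous_const).abs

lemma ball_diff_ae {a b : ℝ} (ha : 0 ≤ a) (hab : a ≤ b) :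
    (ball (0:Plane) b \ ball 0 a : Set Plane) =ᵐ[volume] (ball (0:Plane) b \ closedBall 0 a : Set Plane) := by
  apply ae_of_diff_subset_sphere (x := (0:Plane)) (a := a)
  · exact Set.diff_subset_diff_right ball_subset_closedBall
  · intro x hx
    have hxc : x ∈ closedBall (0:Plane) a := by
      by_contra hc; exact hx.2 ⟨hx.1.1, hc⟩
    rw [← closedBall_diff_ball]; exact ⟨hxc, hx.1.2⟩

lemma Qfun_ball {r s : ℝ} (hr : 0 < r) (hs : 0 < s) :
    2 * Real.pi * Qfun (ball (0:Plane) s) 0 r = (Real.pi * s ^ 2 - Real.pi * r ^ 2) ^ 2 := by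
  have hQ : Qfun (ball (0:Plane) s) 0 r
      = ∫ x in symmDiff (ball (0:Plane) s) (ball 0 r), |‖x‖ ^ 2 - r ^ 2| := by
    simp [Qfun]
  rcases le_total r s with h | h
  · rw [hQ, (show symmDiff (ball (0:Plane) s) (ball 0 r) = ball 0 s \ ball 0 r from
        symmDiff_of_ge (ball_subset_ball h)), setIntegral_congr_set (ball_diff_ae hr.le h),
      setIntegral_congr_fun (g := fun x : Plane => ‖x‖ ^ 2 - r ^ 2)
        (measurableSet_ball.diff measurableSet_closedBall)
        (fun x hx => by
          have hxr : r < ‖x‖ := by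
            simpa [mem_closedBall, dist_zero_right, not_le] using hx.2
          have h2 : r ^ 2 ≤ ‖x‖ ^ 2 := by nlinarith
          show |‖x‖ ^ 2 - r ^ 2| = ‖x‖ ^ 2 - r ^ 2
          exact abs_of_nonneg (by linarith)),
      int_annulus_low hr.le h]
    ring
  · rw [hQ, (show symmDiff (ball (0:Plane) s) (ball 0 r) = ball 0 r \ ball 0 s from
        symmDiff_of_le (ball_subset_ball h)), setIntegral_congr_set (ball_diff_ae hs.le h),
      setIntegral_congr_fun (g := fun x : Plane => r ^ 2 - ‖x‖ ^ 2)
        (measurableSet_ball.diff measurableSet_closedBall)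
        (fun x hx => by
          have hxr : ‖x‖ < r := mem_ball_zero_iff.1 hx.1
          have h2 : ‖x‖ ^ 2 ≤ r ^ 2 := by nlinarith [norm_nonneg x]
          show |‖x‖ ^ 2 - r ^ 2| = r ^ 2 - ‖x‖ ^ 2
          rw [abs_of_nonpos (by linarith)]; ring),
      int_annulus_high hs.le h]
    ring

set_option maxHeartbeats 2000000 in
/-- For `r > 0` and a nonempty bounded open set `A' ⊆ ℝ²`:
`(|A'| − πr²)² ≤ 2π Q(A'; B_r(0))`, with equality iff `A'` coincides, up to a set
of Lebesgue measure zero, with a ball centered at the origin. -/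
theorem stmt6 (r : ℝ) (hr : 0 < r) (A' : Set Plane) (hA : IsOpen A')
    (hAb : Bornology.IsBounded A') (hAne : A'.Nonempty) :
    (mass A' - Real.pi * r ^ 2) ^ 2 ≤ 2 * Real.pi * Qfun A' 0 r ∧
      ((mass A' - Real.pi * r ^ 2) ^ 2 = 2 * Real.pi * Qfun A' 0 r ↔
        ∃ s : ℝ, 0 < s ∧ A' =ᵐ[volume] ball (0 : Plane) s) := by
  have hπ : (0:ℝ) < Real.pi := Real.pi_pos
  have hAm : MeasurableSet A' := hA.measurableSet
  have hSoutm : MeasurableSet (A' \ closedBall (0:Plane) r) :=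
    hAm.diff measurableSet_closedBall
  have hSinm : MeasurableSet (ball (0:Plane) r \ A') := measurableSet_ball.diff hAm
  have hSoutb : Bornology.IsBounded (A' \ closedBall (0:Plane) r) := hAb.subset Set.diff_subset
  have hSinb : Bornology.IsBounded (ball (0:Plane) r \ A') :=
    isBounded_ball.subset Set.diff_subset
  have hABae : (A' \ ball (0:Plane) r : Set Plane)
      =ᵐ[volume] (A' \ closedBall (0:Plane) r : Set Plane) := by
    apply ae_of_diff_subset_sphere (x := (0:Plane)) (a := r)
    · exact fun x hx => ⟨hx.1, fun hb => hx.2 (ball_subset_closedBall hb)⟩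
    · intro x hx
      have hxcb : x ∈ closedBall (0:Plane) r := by
        by_contra hc; exact hx.2 ⟨hx.1.1, hc⟩
      rw [← closedBall_diff_ball]; exact ⟨hxcb, hx.1.2⟩
  have habs_out : Set.EqOn (fun x : Plane => |‖x‖ ^ 2 - r ^ 2|)
      (fun x => ‖x‖ ^ 2 - r ^ 2) (A' \ closedBall (0:Plane) r) := by
    intro x hx
    have hxr : r < ‖x‖ := by simpa [mem_closedBall, dist_zero_right, not_le] using hx.2
    have h2 : r ^ 2 ≤ ‖x‖ ^ 2 := by nlinarith
    show |‖x‖ ^ 2 - r ^ 2| = ‖x‖ ^ 2 - r ^ 2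
    exact abs_of_nonneg (by linarith)
  have habs_in : Set.EqOn (fun x : Plane => |‖x‖ ^ 2 - r ^ 2|)
      (fun x => r ^ 2 - ‖x‖ ^ 2) (ball (0:Plane) r \ A') := by
    intro x hx
    have hxr : ‖x‖ < r := mem_ball_zero_iff.1 hx.1
    have h2 : ‖x‖ ^ 2 ≤ r ^ 2 := by nlinarith [norm_nonneg x]
    show |‖x‖ ^ 2 - r ^ 2| = r ^ 2 - ‖x‖ ^ 2
    rw [abs_of_nonpos (by linarith)]; ring
  have hQsplit : Qfun A' 0 r = (∫ x in A' \ closedBall (0:Plane) r, (‖x‖ ^ 2 - r ^ 2))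
      + ∫ x in ball (0:Plane) r \ A', (r ^ 2 - ‖x‖ ^ 2) := by
    have h0 : Qfun A' 0 r = ∫ x in symmDiff A' (ball (0:Plane) r), |‖x‖ ^ 2 - r ^ 2| := by
      simp [Qfun]
    rw [h0, Set.symmDiff_def, setIntegral_union disjoint_sdiff_sdiff (measurableSet_ball.diff hAm)
        (integrableOn_bounded (cont_abs r) (hAb.subset Set.diff_subset))
        (integrableOn_bounded (cont_abs r) hSinb),
      setIntegral_congr_set hABae, setIntegral_congr_fun hSoutm habs_out,
      setIntegral_congr_fun hSinm habs_in]
  obtain ⟨hle1, heq1⟩ := core_out hr hSoutm hSoutb (fun x hx => hx.2)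
  obtain ⟨hle2, heq2⟩ := core_in hr hSinm (fun x hx => hx.1)
  have hm : mass A' - Real.pi * r ^ 2
      = mass (A' \ closedBall (0:Plane) r) - mass (ball (0:Plane) r \ A') := by
    have h1 := measure_inter_add_diff (μ := volume) (t := ball (0:Plane) r) A' measurableSet_ball
    have h2 := measure_inter_add_diff (μ := volume) (t := A') (ball (0:Plane) r) hAm
    have hfin1 : volume (A' ∩ ball (0:Plane) r) ≠ ⊤ := vol_ne_top (hAb.subset Set.inter_subset_left)
    have hfin2 : volume (A' \ ball (0:Plane) r) ≠ ⊤ := vol_ne_top (hAb.subset Set.diff_subset)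
    have hfin3 : volume (ball (0:Plane) r ∩ A') ≠ ⊤ :=
      vol_ne_top (isBounded_ball.subset Set.inter_subset_left)
    have hfin4 : volume (ball (0:Plane) r \ A') ≠ ⊤ := vol_ne_top hSinb
    have e1 := congrArg ENNReal.toReal h1
    have e2 := congrArg ENNReal.toReal h2
    rw [ENNReal.toReal_add hfin1 hfin2] at e1
    rw [ENNReal.toReal_add hfin3 hfin4] at e2
    have e3 : (volume (A' \ ball (0:Plane) r)).toReal = mass (A' \ closedBall (0:Plane) r) :=
      congrArg ENNReal.toReal (measure_congr hABae)
    have e4 : (volume (ball (0:Plane) r)).toReal = Real.pi * r ^ 2 := mass_ball r hr.le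
    have e5 : (volume (ball (0:Plane) r ∩ A')).toReal = (volume (A' ∩ ball (0:Plane) r)).toReal := by
      rw [Set.inter_comm]
    have e6 : (volume (ball (0:Plane) r \ A')).toReal = mass (ball (0:Plane) r \ A') := rfl
    have e7 : (volume A').toReal = mass A' := rfl
    rw [e3, e7] at e1; rw [e4, e5, e6] at e2
    linarith
  have ht1 : 0 ≤ mass (A' \ closedBall (0:Plane) r) := mass_nonneg _
  have ht2 : 0 ≤ mass (ball (0:Plane) r \ A') := mass_nonneg _
  have k1 : mass (A' \ closedBall (0:Plane) r) ^ 2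
      ≤ (∫ x in A' \ closedBall (0:Plane) r, (‖x‖ ^ 2 - r ^ 2)) * (2 * Real.pi) :=
    (div_le_iff₀ (by positivity)).1 hle1
  have k2 : mass (ball (0:Plane) r \ A') ^ 2
      ≤ (∫ x in ball (0:Plane) r \ A', (r ^ 2 - ‖x‖ ^ 2)) * (2 * Real.pi) :=
    (div_le_iff₀ (by positivity)).1 hle2
  refine ⟨?_, ?_, ?_⟩
  · rw [hQsplit, hm]
    nlinarith [mul_nonneg ht1 ht2]
  · -- equality implies ball
    intro heq
    rw [hQsplit, hm] at heq
    set t1 := mass (A' \ closedBall (0:Plane) r) with ht1_def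
    set t2 := mass (ball (0:Plane) r \ A') with ht2_def
    set I1 := ∫ x in A' \ closedBall (0:Plane) r, (‖x‖ ^ 2 - r ^ 2) with hI1_def
    set I2 := ∫ x in ball (0:Plane) r \ A', (r ^ 2 - ‖x‖ ^ 2) with hI2_def
    have ha0 : I1 * (2 * Real.pi) - t1 ^ 2 = 0 := by nlinarith [mul_nonneg ht1 ht2]
    have hb0 : I2 * (2 * Real.pi) - t2 ^ 2 = 0 := by nlinarith [mul_nonneg ht1 ht2]
    have hc0 : t1 * t2 = 0 := by nlinarith
    have hI1e : I1 = t1 ^ 2 / (2 * Real.pi) := by field_simp; linarith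
    have hI2e : I2 = t2 ^ 2 / (2 * Real.pi) := by field_simp; linarith
    rcases mul_eq_zero.1 hc0 with h10 | h20
    · -- t1 = 0 : A' is a.e. a ball of radius ρ ≤ r
      have hSout0 : volume (A' \ closedBall (0:Plane) r) = 0 := by
        have h10' : (volume (A' \ closedBall (0:Plane) r)).toReal = 0 := h10
        rcases (ENNReal.toReal_eq_zero_iff _).1 h10' with h | h
        · exact h
        · exact absurd h (vol_ne_top hSoutb)
      have hSin_ae := heq2 hI2e
      have ht2le : t2 ≤ Real.pi * r ^ 2 := by
        have h := ENNReal.toReal_mono (vol_ne_top isBounded_ball)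
          (measure_mono (Set.diff_subset : ball (0:Plane) r \ A' ⊆ ball (0:Plane) r))
        rw [show (volume (ball (0:Plane) r)).toReal = Real.pi * r ^ 2 from mass_ball r hr.le] at h
        exact h
      have htπ : t2 / Real.pi ≤ r ^ 2 := by rw [div_le_iff₀ hπ]; linarith
      have htπ0 : 0 ≤ t2 / Real.pi := by positivity
      set ρ := Real.sqrt (r ^ 2 - t2 / Real.pi) with hρ_def
      have hρnn : 0 ≤ ρ := Real.sqrt_nonneg _
      have hρ2 : ρ ^ 2 = r ^ 2 - t2 / Real.pi := Real.sq_sqrt (by linarith)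
      have hρr : ρ ≤ r := by nlinarith
      have hid : A' ∩ ball (0:Plane) r
          = ball (0:Plane) r \ (ball (0:Plane) r \ A') := by
        rw [Set.diff_diff_right_self]; exact Set.inter_comm A' (ball 0 r)
      have hid2 : ball (0:Plane) r \ (ball (0:Plane) r \ closedBall 0 ρ)
          = ball (0:Plane) r ∩ closedBall 0 ρ := Set.diff_diff_right_self _ _
      have hae1 : (A' ∩ ball (0:Plane) r : Set Plane) =ᵐ[volume] ball (0:Plane) ρ := by
        rw [hid]
        have c1 : (ball (0:Plane) r \ (ball (0:Plane) r \ A') : Set Plane)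
            =ᵐ[volume] (ball (0:Plane) r \ (ball (0:Plane) r \ closedBall 0 ρ) : Set Plane) :=
          Filter.EventuallyEq.diff (Filter.EventuallyEq.refl _ _) hSin_ae
        rw [hid2] at c1
        exact c1.trans (inter_ae_ball hρnn hρr)
      have hae2 : (A' \ ball (0:Plane) r : Set Plane) =ᵐ[volume] (∅ : Set Plane) :=
        hABae.trans (MeasureTheory.ae_eq_empty.2 hSout0)
      have hfinal : A' =ᵐ[volume] ball (0:Plane) ρ := by
        have hsplit : A' = (A' ∩ ball (0:Plane) r) ∪ (A' \ ball (0:Plane) r) :=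
          (Set.inter_union_diff _ _).symm
        rw [hsplit]
        have := Filter.EventuallyEq.union hae1 hae2
        simpa using this
      have hmass_pos : 0 < mass A' :=
        ENNReal.toReal_pos (hA.measure_pos volume hAne).ne' (vol_ne_top hAb)
      have hρpos : 0 < ρ := by
        rcases hρnn.lt_or_eq with h | h
        · exact h
        · exfalso
          have hmq : mass A' = Real.pi * ρ ^ 2 := by
            rw [mass, measure_congr hfinal, ← mass, mass_ball ρ hρnn]
          rw [← h] at hmq
          nlinarith
      exact ⟨ρ, hρpos, hfinal⟩
    · -- t2 = 0 : A' is a.e. a ball of radius ρ ≥ r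
      have hSin0 : volume (ball (0:Plane) r \ A') = 0 := by
        have h20' : (volume (ball (0:Plane) r \ A')).toReal = 0 := h20
        rcases (ENNReal.toReal_eq_zero_iff _).1 h20' with h | h
        · exact h
        · exact absurd h (vol_ne_top hSinb)
      have hSout_ae := heq1 hI1e
      have htπ0 : 0 ≤ t1 / Real.pi := by positivity
      set ρ := Real.sqrt (r ^ 2 + t1 / Real.pi) with hρ_def
      have hρnn : 0 ≤ ρ := Real.sqrt_nonneg _
      have hρ2 : ρ ^ 2 = r ^ 2 + t1 / Real.pi := Real.sq_sqrt (by positivity)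
      have hrρ : r ≤ ρ := by nlinarith
      have hae1 : (A' ∩ ball (0:Plane) r : Set Plane) =ᵐ[volume] ball (0:Plane) r := by
        rw [MeasureTheory.ae_eq_set]
        constructor
        · rw [Set.diff_eq_empty.2 Set.inter_subset_right]; exact measure_empty
        · have hbd : ball (0:Plane) r \ (A' ∩ ball (0:Plane) r) = ball (0:Plane) r \ A' := by
            ext x; simp only [Set.mem_diff, Set.mem_inter_iff]; tauto
          rw [hbd]; exact hSin0
      have hae2 : (A' \ ball (0:Plane) r : Set Plane)
          =ᵐ[volume] (ball (0:Plane) ρ \ closedBall 0 r : Set Plane) :=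
        hABae.trans hSout_ae
      have hU : A' =ᵐ[volume]
          (ball (0:Plane) r ∪ (ball (0:Plane) ρ \ closedBall 0 r) : Set Plane) := by
        have hsplit : A' = (A' ∩ ball (0:Plane) r) ∪ (A' \ ball (0:Plane) r) :=
          (Set.inter_union_diff _ _).symm
        rw [hsplit]
        exact Filter.EventuallyEq.union hae1 hae2
      have hball : (ball (0:Plane) ρ : Set Plane)
          =ᵐ[volume] (ball (0:Plane) r ∪ (ball (0:Plane) ρ \ closedBall 0 r) : Set Plane) := by
        apply ae_of_diff_subset_sphere (x := (0:Plane)) (a := r)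
        · exact Set.union_subset (ball_subset_ball hrρ) Set.diff_subset
        · intro x hx
          have hxc : x ∈ closedBall (0:Plane) r := by
            by_contra hc; exact hx.2 (Or.inr ⟨hx.1, hc⟩)
          have hxnb : x ∉ ball (0:Plane) r := fun hb => hx.2 (Or.inl hb)
          rw [← closedBall_diff_ball]; exact ⟨hxc, hxnb⟩
      exact ⟨ρ, lt_of_lt_of_le hr hrρ, hU.trans hball.symm⟩
  · -- ball implies equality
    rintro ⟨s, hs, hae⟩
    have hmass : mass A' = Real.pi * s ^ 2 := by
      rw [mass, measure_congr hae, ← mass, mass_ball s hs.le]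
    have hsymm_ae : (symmDiff A' (ball (0:Plane) r) : Set Plane)
        =ᵐ[volume] (symmDiff (ball (0:Plane) s) (ball (0:Plane) r) : Set Plane) := by
      rw [← MeasureTheory.measure_symmDiff_eq_zero_iff]
      have hident : symmDiff (symmDiff A' (ball (0:Plane) r))
          (symmDiff (ball (0:Plane) s) (ball (0:Plane) r)) = symmDiff A' (ball (0:Plane) s) := by
        rw [symmDiff_assoc, symmDiff_comm (ball (0:Plane) s) (ball (0:Plane) r),
          symmDiff_symmDiff_cancel_left]
      rw [hident]
      exact MeasureTheory.measure_symmDiff_eq_zero_iff.2 hae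
    have hQeq : Qfun A' 0 r = Qfun (ball (0:Plane) s) 0 r := by
      simp only [Qfun]
      exact setIntegral_congr_set hsymm_ae
    rw [hmass, hQeq, Qfun_ball hr hs]
end

section
/- Let A, A' ⊆ ℝ² be nonempty bounded open sets with equal mass |A| = |A'|, equal momentum M(A) = M(A'), and equal angular momentum i(A) = i(A'). Then Q(A; B_r(x₀)) = Q(A'; B_r(x₀)) for every x₀ ∈ ℝ² and every r > 0. -/
open MeasureTheory Metric

lemma integrableOn_of_bdd {E : Type*} [NormedAddCommGroup E] [NormedSpace ℝ E]
    {f : Plane → E} (hf : Continuous f) {A : Set Plane}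
    (hAb : Bornology.IsBounded A) : IntegrableOn f A := by
  obtain ⟨R, hR⟩ := hAb.subset_closedBall 0
  exact (hf.continuousOn.integrableOn_compact (isCompact_closedBall 0 R)).mono_set hR

lemma integral_g (x₀ : Plane) (r : ℝ) {A : Set Plane} (hA : MeasurableSet A)
    (hAb : Bornology.IsBounded A) :
    ∫ x in A, (‖x - x₀‖ ^ 2 - r ^ 2) =
      angMom A - 2 * (inner ℝ (mom A) x₀ : ℝ) + mass A * (‖x₀‖ ^ 2 - r ^ 2) := by
  have h1 : IntegrableOn (fun x : Plane => ‖x‖ ^ 2) A :=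
    integrableOn_of_bdd (by continuity) hAb
  have h2 : IntegrableOn (fun x : Plane => (inner ℝ x₀ x : ℝ)) A :=
    integrableOn_of_bdd (continuous_const.inner continuous_id) hAb
  have hid : IntegrableOn (fun x : Plane => x) A := integrableOn_of_bdd continuous_id hAb
  have key : ∀ x : Plane, ‖x - x₀‖ ^ 2 - r ^ 2 =
      (‖x‖ ^ 2 - 2 * (inner ℝ x₀ x : ℝ)) + (‖x₀‖ ^ 2 - r ^ 2) := by
    intro x
    rw [@norm_sub_sq_real, real_inner_comm]
    ring
  simp_rw [key]
  have hf : IntegrableOn (fun x : Plane => ‖x‖ ^ 2 - 2 * (inner ℝ x₀ x : ℝ)) A :=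
    h1.sub (h2.const_mul 2)
  have h2' : IntegrableOn (fun x : Plane => 2 * (inner ℝ x₀ x : ℝ)) A := h2.const_mul 2
  rw [integral_add hf (integrableOn_const hAb.measure_lt_top.ne),
    integral_sub h1 h2', integral_const_mul, setIntegral_const]
  have hmomi : ∫ x in A, (inner ℝ x₀ x : ℝ) = (inner ℝ (mom A) x₀ : ℝ) := by
    rw [integral_inner hid, real_inner_comm]; rfl
  rw [hmomi]
  simp [angMom, mass, smul_eq_mul, Measure.real]

lemma Qfun_eq (A : Set Plane) (hA : MeasurableSet A) (hAb : Bornology.IsBounded A)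
    (x₀ : Plane) {r : ℝ} (hr : 0 < r) :
    Qfun A x₀ r = (∫ x in A, (‖x - x₀‖ ^ 2 - r ^ 2)) -
      ∫ x in ball x₀ r, (‖x - x₀‖ ^ 2 - r ^ 2) := by
  set B := ball x₀ r with hB
  have hBm : MeasurableSet B := measurableSet_ball
  have hBb : Bornology.IsBounded B := isBounded_ball
  have hg : Continuous fun x : Plane => ‖x - x₀‖ ^ 2 - r ^ 2 := by continuity
  have hgabs : Continuous fun x : Plane => |‖x - x₀‖ ^ 2 - r ^ 2| := hg.abs
  have hint1 : IntegrableOn (fun x : Plane => |‖x - x₀‖ ^ 2 - r ^ 2|) (A \ B) :=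
    (integrableOn_of_bdd hgabs hAb).mono_set Set.diff_subset
  have hint2 : IntegrableOn (fun x : Plane => |‖x - x₀‖ ^ 2 - r ^ 2|) (B \ A) :=
    (integrableOn_of_bdd hgabs hBb).mono_set Set.diff_subset
  have hintA : IntegrableOn (fun x : Plane => ‖x - x₀‖ ^ 2 - r ^ 2) A :=
    integrableOn_of_bdd hg hAb
  have hintB : IntegrableOn (fun x : Plane => ‖x - x₀‖ ^ 2 - r ^ 2) B :=
    integrableOn_of_bdd hg hBb
  have h1 : ∫ x in A \ B, |‖x - x₀‖ ^ 2 - r ^ 2| = ∫ x in A \ B, (‖x - x₀‖ ^ 2 - r ^ 2) := by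
    apply setIntegral_congr_fun (hA.diff hBm)
    intro x hx
    have hx' : r ≤ ‖x - x₀‖ := by
      have := hx.2
      simp only [hB, mem_ball, dist_eq_norm, not_lt] at this
      exact this
    have : r ^ 2 ≤ ‖x - x₀‖ ^ 2 := pow_le_pow_left₀ hr.le hx' 2
    exact abs_of_nonneg (by linarith)
  have h2 : ∫ x in B \ A, |‖x - x₀‖ ^ 2 - r ^ 2| = ∫ x in B \ A, -(‖x - x₀‖ ^ 2 - r ^ 2) := by
    apply setIntegral_congr_fun (hBm.diff hA)
    intro x hx
    have hx' : ‖x - x₀‖ < r := by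
      have := hx.1
      simpa [hB, mem_ball, dist_eq_norm] using this
    have : ‖x - x₀‖ ^ 2 < r ^ 2 := by
      apply pow_lt_pow_left₀ hx' (norm_nonneg _)
      norm_num
    exact abs_of_nonpos (by linarith)
  have hdisj : Disjoint (A \ B) (B \ A) := disjoint_sdiff_sdiff
  have hsd : symmDiff A B = (A \ B) ∪ (B \ A) := Set.symmDiff_def A B
  have hsplit : Qfun A x₀ r = (∫ x in A \ B, |‖x - x₀‖ ^ 2 - r ^ 2|) +
      ∫ x in B \ A, |‖x - x₀‖ ^ 2 - r ^ 2| := by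
    rw [Qfun, hsd, setIntegral_union hdisj (hBm.diff hA) hint1 hint2]
  have hAdecomp : ∫ x in A \ B, (‖x - x₀‖ ^ 2 - r ^ 2) =
      (∫ x in A, (‖x - x₀‖ ^ 2 - r ^ 2)) - ∫ x in A ∩ B, (‖x - x₀‖ ^ 2 - r ^ 2) := by
    rw [show A \ B = A \ (A ∩ B) by rw [Set.diff_self_inter]]
    exact integral_diff (hA.inter hBm) hintA Set.inter_subset_left
  have hBdecomp : ∫ x in B \ A, (‖x - x₀‖ ^ 2 - r ^ 2) =
      (∫ x in B, (‖x - x₀‖ ^ 2 - r ^ 2)) - ∫ x in A ∩ B, (‖x - x₀‖ ^ 2 - r ^ 2) := by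
    rw [show B \ A = B \ (A ∩ B) by rw [Set.inter_comm, Set.diff_self_inter]]
    rw [integral_diff (hA.inter hBm) hintB Set.inter_subset_right]
  rw [hsplit, h1, h2, integral_neg, hAdecomp, hBdecomp]
  ring

/-- If nonempty bounded open sets `A, A' ⊆ ℝ²` have equal mass,
momentum, and angular momentum, then `Q(A; B_r(x₀)) = Q(A'; B_r(x₀))` for every
`x₀ ∈ ℝ²` and every `r > 0`. -/
theorem stmt11 (A A' : Set Plane) (hA : IsOpen A) (hAb : Bornology.IsBounded A)
    (hAne : A.Nonempty) (hA' : IsOpen A') (hA'b : Bornology.IsBounded A')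
    (hA'ne : A'.Nonempty) (hmass : mass A = mass A') (hmom : mom A = mom A')
    (hang : angMom A = angMom A') :
    ∀ (x₀ : Plane) (r : ℝ), 0 < r → Qfun A x₀ r = Qfun A' x₀ r := by
  intro x₀ r hr
  rw [Qfun_eq A hA.measurableSet hAb x₀ hr, Qfun_eq A' hA'.measurableSet hA'b x₀ hr,
    integral_g x₀ r hA.measurableSet hAb, integral_g x₀ r hA'.measurableSet hA'b,
    hmass, hmom, hang]
end
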